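/- If there exists a separable LMP (with countable label set) whose Zhou ordinal equals α + 1, then there exists a separable LMP 𝕊' (with countable label set) whose Zhou ordinal satisfies Z(𝕊') ≥ α + 2. -/

import Mathlib

open MeasureTheory

/-- A labelled Markov process over the measurable space `S` with label set `L`:
each `τ a` is a Markov kernel, i.e. `τ a s` is a subprobability measure for each state `s`,
and `s ↦ τ a s E` is measurable for each measurable `E`. -/
structure LMP (S : Type*) (L : Type*) [MeasurableSpace S] where
  τ : L → S → Measure S
  prob_le_one : ∀ (a : L) (s : S), τ a s Set.univ ≤ 1
  measurable_eval : ∀ (a : L) (E : Set S), MeasurableSet E → Measurable fun s => τ a s E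

namespace LMP

variable {S L : Type*} [MeasurableSpace S]

/-- `A` is `R`-closed: anything related to a point of `A` lies in `A`. -/
def RClosed (R : Set (S × S)) (A : Set S) : Prop :=
  ∀ ⦃x⦄, x ∈ A → ∀ ⦃s⦄, (x, s) ∈ R → s ∈ A

/-- `Σ(R)`: the family of measurable `R`-closed sets. -/
def sigmaCl (R : Set (S × S)) : Set (Set S) :=
  {A | MeasurableSet A ∧ RClosed R A}

/-- `R(Λ)`: the relation identifying states belonging to exactly the same members of `Λ`. -/
def rel (Λ : Set (Set S)) : Set (S × S) :=
  {p | ∀ A ∈ Λ, p.1 ∈ A ↔ p.2 ∈ A}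

/-- `R^T(Λ)`: states assigning the same probabilities to every member of `Λ`, for all labels. -/
def relT (M : LMP S L) (Λ : Set (Set S)) : Set (S × S) :=
  {p | ∀ (a : L), ∀ E ∈ Λ, M.τ a p.1 E = M.τ a p.2 E}

/-- The operator `𝒪`. -/
def Oop (M : LMP S L) (R : Set (S × S)) : Set (S × S) :=
  M.relT (sigmaCl R)

/-- The operator `𝒢`. -/
def Gop (M : LMP S L) (Λ : Set (Set S)) : Set (Set S) :=
  sigmaCl (M.relT Λ)

/-- The members of the σ-algebra generated by a family of sets. -/
def sigmaGen (U : Set (Set S)) : Set (Set S) :=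
  {A | MeasurableSet[MeasurableSpace.generateFrom U] A}

/-- Transfinite iterates of `𝒪`. -/
noncomputable def Oiter (M : LMP S L) (R : Set (S × S)) (α : Ordinal) : Set (S × S) :=
  Ordinal.limitRecOn α R (fun _ prev => M.Oop prev)
    (fun o _ ih => ⋂ (o' : Ordinal) (h : o' < o), ih o' h)

/-- Transfinite iterates of `𝒢`. -/
noncomputable def Giter (M : LMP S L) (Λ : Set (Set S)) (α : Ordinal) : Set (Set S) :=
  Ordinal.limitRecOn α Λ (fun _ prev => M.Gop prev)
    (fun o _ ih => sigmaGen (⋃ (o' : Ordinal) (h : o' < o), ih o' h))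

/-- `Λ` is a sub-σ-algebra of the ambient σ-algebra. -/
structure IsSubSigmaAlgebra (Λ : Set (Set S)) : Prop where
  subset_meas : ∀ A ∈ Λ, MeasurableSet A
  empty_mem : (∅ : Set S) ∈ Λ
  compl_mem : ∀ A ∈ Λ, Aᶜ ∈ Λ
  iUnion_mem : ∀ f : ℕ → Set S, (∀ n, f n ∈ Λ) → (⋃ n, f n) ∈ Λ

/-- A family `Λ` is stable w.r.t. the process. -/
def Stable (M : LMP S L) (Λ : Set (Set S)) : Prop :=
  ∀ A ∈ Λ, ∀ q : ℚ, 0 ≤ q → q ≤ 1 → ∀ a : L,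
    {s : S | ENNReal.ofReal (q : ℝ) < M.τ a s A} ∈ Λ

/-- A state bisimulation: a symmetric relation such that related states agree on
all measurable `R`-closed sets. -/
def IsStateBisim (M : LMP S L) (R : Set (S × S)) : Prop :=
  (∀ p ∈ R, (p.2, p.1) ∈ R) ∧
    ∀ p ∈ R, ∀ (a : L), ∀ C ∈ sigmaCl R, M.τ a p.1 C = M.τ a p.2 C

/-- State bisimilarity. -/
def stateBisim (M : LMP S L) : Set (S × S) :=
  {p | ∃ R, M.IsStateBisim R ∧ p ∈ R}

/-- Event bisimilarity: related by `R(Λ)` for some stable sub-σ-algebra `Λ`. -/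
def eventBisim (M : LMP S L) : Set (S × S) :=
  {p | ∃ Λ : Set (Set S), IsSubSigmaAlgebra Λ ∧ M.Stable Λ ∧ p ∈ rel Λ}

/-- Formulas of the modal logic `𝓛`. -/
inductive LForm (L : Type*) : Type _
  | top : LForm L
  | and : LForm L → LForm L → LForm L
  | dia : L → {q : ℚ // 0 ≤ q ∧ q < 1} → LForm L → LForm L

/-- Semantics of the logic `𝓛`. -/
def sem (M : LMP S L) : LForm L → Set S
  | LForm.top => Set.univ
  | LForm.and φ ψ => M.sem φ ∩ M.sem ψ
  | LForm.dia a q φ => {s | ENNReal.ofReal ((q : ℚ) : ℝ) < M.τ a s (M.sem φ)}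

/-- `σ(⟦𝓛⟧)`: the σ-algebra generated by the sets definable in the logic. -/
def sigmaLogic (M : LMP S L) : Set (Set S) :=
  sigmaGen (Set.range M.sem)

end LMP

/-- A measurable space is separable if its σ-algebra is countably generated and
separates points. -/
def SeparableMeasurableSpace (S : Type*) [m : MeasurableSpace S] : Prop :=
  (∃ U : Set (Set S), U.Countable ∧ MeasurableSpace.generateFrom U = m) ∧
    ∀ s t : S, s ≠ t → ∃ A : Set S, MeasurableSet A ∧ s ∈ A ∧ t ∉ A

namespace LMP

/-- `ζ` is the Zhou ordinal of `M`: the least ordinal `α` such that `𝒪^α(∼e) = ∼s`. -/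
def IsZhou {S L : Type*} [MeasurableSpace S] (M : LMP S L) (ζ : Ordinal) : Prop :=
  M.Oiter M.eventBisim ζ = M.stateBisim ∧
    ∀ β < ζ, M.Oiter M.eventBisim β ≠ M.stateBisim

end LMP

/-- A labelled Markov process bundled together with its state space and a countable
label set. -/
structure PackedLMP : Type 1 where
  S : Type
  mS : MeasurableSpace S
  L : Type
  cL : Countable L
  M : @LMP S L mS

namespace PackedLMP

/-- The bundled LMP is separable. -/
def Separable (P : PackedLMP) : Prop :=
  letI := P.mS; SeparableMeasurableSpace P.S

/-- `ζ` is the Zhou ordinal of the bundled LMP. -/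
def IsZhou (P : PackedLMP) (ζ : Ordinal.{0}) : Prop :=
  letI := P.mS; LMP.IsZhou P.M ζ

end PackedLMP

/-- The set of Zhou ordinals of separable LMPs. -/
def zhouOrdinals : Set Ordinal.{0} :=
  {ζ | ∃ P : PackedLMP, P.Separable ∧ P.IsZhou ζ}


/-! ### Auxiliary development -/
set_option linter.unusedSectionVars false
set_option linter.unnecessarySimpa false
set_option linter.unusedVariables false

namespace LMP

variable {S L : Type} [MeasurableSpace S] (M : LMP S L)

namespace IsSubSigmaAlgebra

variable {Λ : Set (Set S)}

theorem univ_mem (h : IsSubSigmaAlgebra Λ) : Set.univ ∈ Λ := by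
  simpa using h.compl_mem ∅ h.empty_mem

theorem union_mem (h : IsSubSigmaAlgebra Λ) {A B : Set S} (hA : A ∈ Λ) (hB : B ∈ Λ) :
    A ∪ B ∈ Λ := by
  have h2 := h.iUnion_mem (fun n => if n = 0 then A else B)
    (by intro n; split <;> assumption)
  have h3 : (⋃ n : ℕ, if n = 0 then A else B) = A ∪ B := by
    ext x
    simp only [Set.mem_iUnion, Set.mem_union]
    constructor
    · rintro ⟨n, hn⟩
      by_cases h0 : n = 0
      · left; simpa [h0] using hn
      · right; simpa [h0] using hn
    · rintro (hx | hx)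
      · exact ⟨0, by simpa using hx⟩
      · exact ⟨1, by simpa using hx⟩
  rwa [h3] at h2

theorem inter_mem (h : IsSubSigmaAlgebra Λ) {A B : Set S} (hA : A ∈ Λ) (hB : B ∈ Λ) :
    A ∩ B ∈ Λ := by
  have : A ∩ B = (Aᶜ ∪ Bᶜ)ᶜ := by rw [Set.compl_union, compl_compl, compl_compl]
  rw [this]
  exact h.compl_mem _ (h.union_mem (h.compl_mem _ hA) (h.compl_mem _ hB))

end IsSubSigmaAlgebra

theorem measurable_sem : ∀ φ : LForm L, MeasurableSet (M.sem φ)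
  | .top => MeasurableSet.univ
  | .and φ ψ => (measurable_sem φ).inter (measurable_sem ψ)
  | .dia a q φ => by
      have h1 : Measurable fun s => M.τ a s (M.sem φ) :=
        M.measurable_eval a _ (measurable_sem φ)
      exact h1 measurableSet_Ioi

theorem sem_mem_of_stable {Λ : Set (Set S)} (hΛ : IsSubSigmaAlgebra Λ) (hst : M.Stable Λ) :
    ∀ φ : LForm L, M.sem φ ∈ Λ
  | .top => hΛ.univ_mem
  | .and φ ψ => hΛ.inter_mem (sem_mem_of_stable hΛ hst φ) (sem_mem_of_stable hΛ hst ψ)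
  | .dia a q φ => hst _ (sem_mem_of_stable hΛ hst φ) q.1 q.2.1 q.2.2.le a

theorem mem_rel_sigmaGen {U : Set (Set S)} {p : S × S} (h : p ∈ rel U) :
    p ∈ rel (sigmaGen U) := by
  intro A hA
  refine MeasurableSpace.generateFrom_induction U (fun A _ => (p.1 ∈ A ↔ p.2 ∈ A))
    (fun t ht _ => h t ht) (by simp) (fun t _ iht => by simp [Set.mem_compl_iff, iht])
    (fun f _ ihf => by simp only [Set.mem_iUnion]; exact exists_congr fun n => ihf n) A hA

theorem rel_symm {Λ : Set (Set S)} {p q : S} (h : (p, q) ∈ rel Λ) : (q, p) ∈ rel Λ :=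
  fun A hA => (h A hA).symm

theorem relT_symm {Λ : Set (Set S)} {p q : S} (h : (p, q) ∈ M.relT Λ) : (q, p) ∈ M.relT Λ :=
  fun a E hE => (h a E hE).symm

theorem eventBisim_symm {p q : S} (h : (p, q) ∈ M.eventBisim) : (q, p) ∈ M.eventBisim := by
  obtain ⟨Λ, h1, h2, h3⟩ := h
  exact ⟨Λ, h1, h2, rel_symm h3⟩

end LMP

/-- measurability of an `ENNReal`-valued function from rational level sets -/
theorem LMP.measurable_of_rat {T : Type} {m0 : MeasurableSpace T} (f : T → ENNReal) (hle : ∀ s, f s ≤ 1)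
    (h : ∀ q : ℚ, 0 ≤ q → q ≤ 1 → MeasurableSet[m0] {s | ENNReal.ofReal (q : ℝ) < f s}) :
    Measurable[m0] f := by
  apply measurable_of_Ioi
  intro x
  rcases le_or_gt 1 x with hx | hx
  · have hempty : f ⁻¹' Set.Ioi x = ∅ := by
      ext s
      simp only [Set.mem_preimage, Set.mem_Ioi, Set.mem_empty_iff_false, iff_false, not_lt]
      exact (hle s).trans hx
    rw [hempty]
    exact MeasurableSet.empty
  · have hset : f ⁻¹' Set.Ioi x =
        ⋃ q : {q : ℚ // 0 ≤ q ∧ q ≤ 1 ∧ x < ENNReal.ofReal (q : ℝ)},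
          {s | ENNReal.ofReal ((q : ℚ) : ℝ) < f s} := by
      ext s
      simp only [Set.mem_preimage, Set.mem_Ioi, Set.mem_iUnion, Set.mem_setOf_eq]
      constructor
      · intro hs
        obtain ⟨q, hq0, hxq, hqf⟩ := ENNReal.lt_iff_exists_rat_btwn.mp hs
        have hof : ENNReal.ofReal (q : ℝ) = ((Real.toNNReal (q : ℝ)) : ENNReal) := rfl
        have hq1 : q ≤ 1 := by
          by_contra hq1
          push_neg at hq1
          have h2 : (1 : ENNReal) ≤ ((Real.toNNReal (q : ℝ)) : ENNReal) := by
            have h3 : (1 : NNReal) ≤ Real.toNNReal (q : ℝ) := by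
              rw [← Real.toNNReal_one]
              exact Real.toNNReal_mono (by exact_mod_cast hq1.le)
            exact_mod_cast h3
          exact absurd ((lt_of_le_of_lt h2 hqf).trans_le (hle s)) (lt_irrefl _)
        exact ⟨⟨q, hq0, hq1, by rw [hof]; exact hxq⟩, by rw [hof]; exact hqf⟩
      · rintro ⟨⟨q, hq0, hq1, hxq⟩, hqf⟩
        exact lt_trans hxq hqf
    rw [hset]
    exact MeasurableSet.iUnion fun q => h q q.2.1 q.2.2.1

namespace LMP

variable {S L : Type} [MeasurableSpace S] (M : LMP S L)

theorem generateFrom_range_sem_le :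
    MeasurableSpace.generateFrom (Set.range M.sem) ≤ ‹MeasurableSpace S› := by
  apply MeasurableSpace.generateFrom_le
  rintro t ⟨φ, rfl⟩
  exact M.measurable_sem φ

theorem tau_measurable_sigmaLogic :
    ∀ A : Set S, MeasurableSet[MeasurableSpace.generateFrom (Set.range M.sem)] A →
      ∀ a : L, Measurable[MeasurableSpace.generateFrom (Set.range M.sem)]
        (fun s => M.τ a s A) := by
  have hle := M.generateFrom_range_sem_le
  have hpi : IsPiSystem (Set.range M.sem) := by
    rintro A ⟨φ, rfl⟩ B ⟨ψ, rfl⟩ _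
    exact ⟨φ.and ψ, rfl⟩
  have hbasic : ∀ (φ : LForm L) (a : L),
      Measurable[MeasurableSpace.generateFrom (Set.range M.sem)]
        (fun s => M.τ a s (M.sem φ)) := by
    intro φ a
    apply LMP.measurable_of_rat (m0 := MeasurableSpace.generateFrom (Set.range M.sem))
    · intro s
      exact (measure_mono (Set.subset_univ _)).trans (M.prob_le_one a s)
    · intro q hq0 hq1
      rcases lt_or_eq_of_le hq1 with hq1' | rfl
      · exact MeasurableSpace.measurableSet_generateFrom ⟨LForm.dia a ⟨q, hq0, hq1'⟩ φ, rfl⟩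
      · have : {s | ENNReal.ofReal ((1 : ℚ) : ℝ) < M.τ a s (M.sem φ)} = ∅ := by
          ext s
          simp only [Set.mem_setOf_eq, Set.mem_empty_iff_false, iff_false, not_lt]
          calc M.τ a s (M.sem φ) ≤ 1 := (measure_mono (Set.subset_univ _)).trans (M.prob_le_one a s)
          _ = ENNReal.ofReal ((1 : ℚ) : ℝ) := by simp
        rw [this]
        exact @MeasurableSet.empty _ (MeasurableSpace.generateFrom (Set.range M.sem))
  intro A hA a
  revert a
  refine MeasurableSpace.induction_on_inter (C := fun A _ => ∀ a : L,
      Measurable[MeasurableSpace.generateFrom (Set.range M.sem)] (fun s => M.τ a s A))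
    (s := Set.range M.sem) (m := MeasurableSpace.generateFrom (Set.range M.sem)) rfl hpi ?_ ?_ ?_ ?_ A hA
  · intro a
    simpa using (measurable_const :
      Measurable[MeasurableSpace.generateFrom (Set.range M.sem)] (fun _ : S => (0 : ENNReal)))
  · rintro t ⟨φ, rfl⟩
    exact hbasic φ
  · intro t htm iht a
    have htm' : MeasurableSet t := hle _ htm
    have hrw : (fun s => M.τ a s tᶜ) = fun s => M.τ a s Set.univ - M.τ a s t := by
      funext s
      exact measure_compl htm' (((measure_mono (Set.subset_univ _)).trans
        (M.prob_le_one a s)).trans_lt ENNReal.one_lt_top).ne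
    rw [hrw]
    have huniv := hbasic LForm.top a
    exact Measurable.sub huniv (iht a)
  · intro f hdisj hfm ihf a
    have hrw : (fun s => M.τ a s (⋃ i, f i)) = fun s => ∑' i, M.τ a s (f i) := by
      funext s
      exact measure_iUnion hdisj fun i => hle _ (hfm i)
    rw [hrw]
    exact Measurable.ennreal_tsum fun i => ihf i a

theorem stable_sigmaLogic : M.Stable M.sigmaLogic := by
  intro A hA q hq0 hq1 a
  exact M.tau_measurable_sigmaLogic A hA a measurableSet_Ioi

theorem isSubSigmaAlgebra_sigmaLogic : IsSubSigmaAlgebra M.sigmaLogic where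
  subset_meas A hA := M.generateFrom_range_sem_le _ hA
  empty_mem := @MeasurableSet.empty _ (MeasurableSpace.generateFrom (Set.range M.sem))
  compl_mem A hA := @MeasurableSet.compl S A (MeasurableSpace.generateFrom (Set.range M.sem)) hA
  iUnion_mem f hf := @MeasurableSet.iUnion S _ (MeasurableSpace.generateFrom (Set.range M.sem)) _ f hf

theorem eventBisim_subset_rel_range : M.eventBisim ⊆ rel (Set.range M.sem) := by
  rintro p ⟨Λ, hΛ, hst, hp⟩ A ⟨φ, rfl⟩
  exact hp _ (M.sem_mem_of_stable hΛ hst φ)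

theorem rel_range_subset_eventBisim : rel (Set.range M.sem) ⊆ M.eventBisim := by
  intro p hp
  exact ⟨M.sigmaLogic, M.isSubSigmaAlgebra_sigmaLogic, M.stable_sigmaLogic, mem_rel_sigmaGen hp⟩

theorem sigmaCl_antitone {R R' : Set (S × S)} (h : R ⊆ R') : sigmaCl R' ⊆ sigmaCl R :=
  fun _A hA => ⟨hA.1, fun _x hx _s hs => hA.2 hx (h hs)⟩

theorem Oop_mono {R R' : Set (S × S)} (h : R ⊆ R') : M.Oop R ⊆ M.Oop R' :=
  fun _p hp a E hE => hp a E (sigmaCl_antitone h hE)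

theorem Oop_eventBisim_subset : M.Oop M.eventBisim ⊆ M.eventBisim := by
  intro p hp
  apply M.rel_range_subset_eventBisim
  rintro A ⟨φ, rfl⟩
  induction φ with
  | top => simp [sem]
  | and φ ψ ihφ ihψ =>
    simp only [sem, Set.mem_inter_iff]
    rw [ihφ, ihψ]
  | dia a q φ ih =>
    have hcl : M.sem φ ∈ sigmaCl M.eventBisim := by
      refine ⟨M.measurable_sem φ, fun x hx s hs => ?_⟩
      exact (M.eventBisim_subset_rel_range hs (M.sem φ) ⟨φ, rfl⟩).mp hx
    have heq := hp a _ hcl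
    simp only [sem, Set.mem_setOf_eq]
    rw [heq]

theorem Oiter_zero (R : Set (S × S)) : M.Oiter R 0 = R :=
  Ordinal.limitRecOn_zero _ _ _

theorem Oiter_succ (R : Set (S × S)) (α : Ordinal) :
    M.Oiter R (α + 1) = M.Oop (M.Oiter R α) := by
  unfold Oiter
  rw [Ordinal.add_one_eq_succ, Ordinal.limitRecOn_succ]

theorem Oiter_limit (R : Set (S × S)) {α : Ordinal} (h : Order.IsSuccLimit α) :
    M.Oiter R α = ⋂ (β : Ordinal) (_ : β < α), M.Oiter R β := by
  unfold Oiter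
  rw [Ordinal.limitRecOn_limit _ _ _ _ h]

theorem Oiter_symm (R : Set (S × S)) (hR : ∀ p ∈ R, (p.2, p.1) ∈ R) :
    ∀ α : Ordinal, ∀ p ∈ M.Oiter R α, (p.2, p.1) ∈ M.Oiter R α := by
  intro α
  induction α using Ordinal.induction with
  | _ α ih =>
    rcases Ordinal.zero_or_succ_or_isSuccLimit α with rfl | ⟨β, rfl⟩ | hlim
    · rw [Oiter_zero]; exact hR
    · rw [← Ordinal.add_one_eq_succ, Oiter_succ]
      intro p hp
      exact M.relT_symm hp
    · rw [Oiter_limit M R hlim]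
      intro p hp
      simp only [Set.mem_iInter] at hp ⊢
      intro β hβ
      exact ih β hβ p (hp β hβ)

theorem Oiter_succ_subset (R : Set (S × S)) (h0 : M.Oop R ⊆ R) :
    ∀ α : Ordinal, M.Oiter R (α + 1) ⊆ M.Oiter R α := by
  intro α
  induction α using Ordinal.induction with
  | _ α ih =>
    rcases Ordinal.zero_or_succ_or_isSuccLimit α with rfl | ⟨β, rfl⟩ | hlim
    · rw [Oiter_succ, Oiter_zero]; exact h0
    · rw [← Ordinal.add_one_eq_succ, Oiter_succ, Oiter_succ]
      have hih := ih β (by rw [← Ordinal.add_one_eq_succ]; exact Order.lt_succ β)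
      rw [Oiter_succ] at hih
      exact M.Oop_mono hih
    · intro p hp
      rw [Oiter_limit M R hlim]
      simp only [Set.mem_iInter]
      intro β hβ
      have h1 : M.Oiter R (α + 1) ⊆ M.Oiter R (β + 1) := by
        rw [Oiter_succ, Oiter_succ]
        apply M.Oop_mono
        intro x hx
        rw [Oiter_limit M R hlim] at hx
        simp only [Set.mem_iInter] at hx
        exact hx β hβ
      exact ih β hβ (h1 hp)

theorem Oiter_antitone (R : Set (S × S)) (h0 : M.Oop R ⊆ R) {β γ : Ordinal} (h : β ≤ γ) :
    M.Oiter R γ ⊆ M.Oiter R β := by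
  induction γ using Ordinal.induction with
  | _ γ ih =>
    rcases eq_or_lt_of_le h with rfl | hlt
    · exact subset_rfl
    rcases Ordinal.zero_or_succ_or_isSuccLimit γ with rfl | ⟨δ, rfl⟩ | hlim
    · exact absurd hlt (not_lt_zero (a := β))
    · rw [← Ordinal.add_one_eq_succ]
      have hδ : δ < Order.succ δ := Order.lt_succ δ
      have hβδ : β ≤ δ := Order.lt_succ_iff.mp hlt
      exact fun p hp => ih δ hδ hβδ (M.Oiter_succ_subset R h0 δ hp)
    · intro p hp
      rw [Oiter_limit M R hlim] at hp
      simp only [Set.mem_iInter] at hp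
      exact hp β hlt

theorem stateBisim_symm {p q : S} (h : (p, q) ∈ M.stateBisim) : (q, p) ∈ M.stateBisim := by
  obtain ⟨R, hR, hpq⟩ := h
  exact ⟨R, hR, hR.1 _ hpq⟩

theorem stateBisim_subset_eventBisim : M.stateBisim ⊆ M.eventBisim := by
  intro p hp
  refine ⟨sigmaCl M.stateBisim, ?_, ?_, ?_⟩
  · refine ⟨fun A hA => hA.1, ⟨MeasurableSet.empty, fun x hx => absurd hx (Set.notMem_empty x)⟩,
      fun A hA => ⟨hA.1.compl, fun x hx s hs hsA => hx (hA.2 hsA (M.stateBisim_symm hs))⟩,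
      fun f hf => ⟨MeasurableSet.iUnion fun n => (hf n).1, fun x hx s hs => ?_⟩⟩
    obtain ⟨A, ⟨n, rfl⟩, hxA⟩ := hx
    exact Set.mem_iUnion.mpr ⟨n, (hf n).2 hxA hs⟩
  · intro A hA q hq0 hq1 a
    refine ⟨M.measurable_eval a A hA.1 measurableSet_Ioi, fun x hx s hs => ?_⟩
    obtain ⟨R, hR, hxs⟩ := hs
    have hAR : RClosed R A := fun x' hx' s' hs' => hA.2 hx' ⟨R, hR, hs'⟩
    have heq := hR.2 _ hxs a A ⟨hA.1, hAR⟩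
    show ENNReal.ofReal _ < M.τ a s A
    rw [← heq]
    exact hx
  · intro A hA
    exact ⟨fun h1 => hA.2 h1 hp, fun h2 => hA.2 h2 (M.stateBisim_symm hp)⟩

theorem stateBisim_subset_Oiter : ∀ α : Ordinal, M.stateBisim ⊆ M.Oiter M.eventBisim α := by
  intro α
  induction α using Ordinal.induction with
  | _ α ih =>
    rcases Ordinal.zero_or_succ_or_isSuccLimit α with rfl | ⟨β, rfl⟩ | hlim
    · rw [Oiter_zero]; exact M.stateBisim_subset_eventBisim
    · rw [← Ordinal.add_one_eq_succ, Oiter_succ]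
      rintro p ⟨R, hR, hpR⟩ a E hE
      have hβ : β < Order.succ β := Order.lt_succ β
      have hRsub : R ⊆ M.Oiter M.eventBisim β := fun x hx => ih β hβ ⟨R, hR, hx⟩
      exact hR.2 p hpR a E ⟨hE.1, fun x hx s hs => hE.2 hx (hRsub hs)⟩
    · intro p hp
      rw [Oiter_limit M _ hlim]
      simp only [Set.mem_iInter]
      exact fun β hβ => ih β hβ hp

theorem exists_isZhou : ∃ ζ : Ordinal.{0}, M.IsZhou ζ := by
  have h0 := M.Oop_eventBisim_subset
  have hfix : ∃ β : Ordinal.{0}, M.Oiter M.eventBisim (β + 1) = M.Oiter M.eventBisim β := by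
    by_contra hc
    push_neg at hc
    have hinj : Function.Injective (fun β : Ordinal.{0} => M.Oiter M.eventBisim β) := by
      intro β γ hbg
      by_contra hne
      wlog hlt : β < γ generalizing β γ
      · exact this hbg.symm (Ne.symm hne) ((Ne.lt_or_gt hne).resolve_left hlt)
      · have hle : β + 1 ≤ γ := by
          rw [Ordinal.add_one_eq_succ]
          exact Order.succ_le_iff.mpr hlt
        have h1 : M.Oiter M.eventBisim γ ⊆ M.Oiter M.eventBisim (β + 1) :=
          M.Oiter_antitone _ h0 hle
        have h2 := M.Oiter_succ_subset _ h0 β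
        apply hc β
        apply subset_antisymm h2
        have hbg' : M.Oiter M.eventBisim β = M.Oiter M.eventBisim γ := hbg
        rw [hbg']
        exact h1
    exact not_injective_of_ordinal _ hinj
  obtain ⟨β, hβ⟩ := hfix
  have hsb : M.Oiter M.eventBisim β = M.stateBisim := by
    apply subset_antisymm
    · intro p hp
      refine ⟨M.Oiter M.eventBisim β, ⟨?_, ?_⟩, hp⟩
      · exact fun p' hp' => M.Oiter_symm _ (fun r hr => M.eventBisim_symm hr) β p' hp'
      · intro p' hp' a C hC
        have hp'' : p' ∈ M.Oiter M.eventBisim (β + 1) := by rw [hβ]; exact hp'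
        rw [Oiter_succ] at hp''
        exact hp'' a C hC
    · exact M.stateBisim_subset_Oiter β
  have hne : {γ : Ordinal.{0} | M.Oiter M.eventBisim γ = M.stateBisim}.Nonempty := ⟨β, hsb⟩
  refine ⟨sInf {γ : Ordinal.{0} | M.Oiter M.eventBisim γ = M.stateBisim}, csInf_mem hne,
    fun γ hγ hγeq => ?_⟩
  exact absurd (csInf_le' (hγeq : γ ∈ _)) (not_le.mpr hγ)

/-! ### The extended process -/

variable (s₀ t₀ : S)

/-- The extension of `M` by two fresh states and a fresh label sending them to
`s₀` and `t₀` respectively. -/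
noncomputable def sumLMP : LMP (S ⊕ Bool) (L ⊕ Unit) where
  τ c z := match c, z with
    | Sum.inl a, Sum.inl s => (M.τ a s).map Sum.inl
    | Sum.inl _, Sum.inr _ => 0
    | Sum.inr _, Sum.inl _ => 0
    | Sum.inr _, Sum.inr b => Measure.dirac (Sum.inl (cond b s₀ t₀))
  prob_le_one := by
    rintro (a | u) (s | b)
    · rw [Measure.map_apply measurable_inl MeasurableSet.univ, Set.preimage_univ]
      exact M.prob_le_one a s
    · simp
    · simp
    · simp
  measurable_eval := by
    rintro (a | u) E hE
    · apply measurable_fun_sum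
      · have : (fun z => (match (Sum.inl a : L ⊕ Unit), z with
            | Sum.inl a, Sum.inl s => (M.τ a s).map Sum.inl
            | Sum.inl _, Sum.inr _ => 0
            | Sum.inr _, Sum.inl _ => 0
            | Sum.inr _, Sum.inr b => Measure.dirac (Sum.inl (cond b s₀ t₀))) E) ∘
            Sum.inl = fun s => M.τ a s (Sum.inl ⁻¹' E) := by
          funext s
          exact Measure.map_apply measurable_inl hE
        rw [this]
        exact M.measurable_eval a _ (measurable_inl hE)
      · exact measurable_of_countable _
    · apply measurable_fun_sum
      · exact measurable_const
      · exact measurable_of_countable _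

theorem sumLMP_inl_inl_apply (a : L) (s : S) {E : Set (S ⊕ Bool)} (hE : MeasurableSet E) :
    (M.sumLMP s₀ t₀).τ (Sum.inl a) (Sum.inl s) E = M.τ a s (Sum.inl ⁻¹' E) :=
  Measure.map_apply measurable_inl hE

theorem sumLMP_inl_inr (a : L) (b : Bool) :
    (M.sumLMP s₀ t₀).τ (Sum.inl a) (Sum.inr b) = 0 := rfl

theorem sumLMP_inr_inl (u : Unit) (s : S) :
    (M.sumLMP s₀ t₀).τ (Sum.inr u) (Sum.inl s) = 0 := rfl

theorem sumLMP_inr_inr (u : Unit) (b : Bool) :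
    (M.sumLMP s₀ t₀).τ (Sum.inr u) (Sum.inr b) =
      Measure.dirac (Sum.inl (cond b s₀ t₀)) := rfl

theorem cross_not_eventBisim (s : S) (b : Bool) :
    (Sum.inl s, Sum.inr b) ∉ (M.sumLMP s₀ t₀).eventBisim := by
  intro h
  have hmem := (M.sumLMP s₀ t₀).eventBisim_subset_rel_range h
    ((M.sumLMP s₀ t₀).sem (LForm.dia (Sum.inr ()) ⟨1/2, by norm_num, by norm_num⟩ LForm.top))
    ⟨LForm.dia (Sum.inr ()) ⟨1/2, by norm_num, by norm_num⟩ LForm.top, rfl⟩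
  simp only [sem, Set.mem_setOf_eq, sumLMP_inr_inl, sumLMP_inr_inr] at hmem
  rw [Measure.coe_zero, Pi.zero_apply] at hmem
  have h1 : Measure.dirac (Sum.inl (cond b s₀ t₀) : S ⊕ Bool) Set.univ = 1 :=
    by simp
  rw [h1] at hmem
  have h2 : ENNReal.ofReal ((1/2 : ℚ) : ℝ) < 1 := by
    rw [ENNReal.ofReal_lt_one]
    norm_num
  have h3 : ¬ (ENNReal.ofReal ((1/2 : ℚ) : ℝ) < 0) := by simp
  exact h3 (hmem.mpr h2)

theorem cross_not_Oiter (s : S) (b : Bool) (β : Ordinal) :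
    (Sum.inl s, Sum.inr b) ∉ (M.sumLMP s₀ t₀).Oiter (M.sumLMP s₀ t₀).eventBisim β := by
  intro h
  have h1 : (M.sumLMP s₀ t₀).Oiter (M.sumLMP s₀ t₀).eventBisim β ⊆
      (M.sumLMP s₀ t₀).Oiter (M.sumLMP s₀ t₀).eventBisim 0 :=
    (M.sumLMP s₀ t₀).Oiter_antitone _ (M.sumLMP s₀ t₀).Oop_eventBisim_subset (zero_le (a := β))
  rw [Oiter_zero] at h1
  exact M.cross_not_eventBisim s₀ t₀ s b (h1 h)

theorem cross_not_Oiter' (s : S) (b : Bool) (β : Ordinal) :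
    (Sum.inr b, Sum.inl s) ∉ (M.sumLMP s₀ t₀).Oiter (M.sumLMP s₀ t₀).eventBisim β := by
  intro h
  exact M.cross_not_Oiter s₀ t₀ s b β
    ((M.sumLMP s₀ t₀).Oiter_symm _ (fun r hr => (M.sumLMP s₀ t₀).eventBisim_symm hr) β _ h)

/-- Translation of formulas into the extended label set. -/
def trForm : LForm L → LForm (L ⊕ Unit)
  | .top => .top
  | .and φ ψ => .and (trForm φ) (trForm ψ)
  | .dia a q φ => .dia (Sum.inl a) q (trForm φ)

theorem preimage_sem_trForm (φ : LForm L) :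
    Sum.inl ⁻¹' ((M.sumLMP s₀ t₀).sem (trForm φ)) = M.sem φ := by
  induction φ with
  | top => rfl
  | and φ ψ ihφ ihψ =>
    show Sum.inl ⁻¹' (_ ∩ _) = _
    rw [Set.preimage_inter, ihφ, ihψ]
    rfl
  | dia a q φ ih =>
    ext s
    simp only [trForm, sem, Set.mem_preimage, Set.mem_setOf_eq]
    rw [M.sumLMP_inl_inl_apply s₀ t₀ a s ((M.sumLMP s₀ t₀).measurable_sem (trForm φ)), ih]

theorem inl_image_mem_sigmaCl {E : Set S} {β : Ordinal}
    (hE : E ∈ sigmaCl (M.Oiter M.eventBisim β))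
    (hproj : ∀ p u : S, (Sum.inl p, Sum.inl u) ∈
        (M.sumLMP s₀ t₀).Oiter (M.sumLMP s₀ t₀).eventBisim β → (p, u) ∈ M.Oiter M.eventBisim β) :
    Sum.inl '' E ∈ sigmaCl ((M.sumLMP s₀ t₀).Oiter (M.sumLMP s₀ t₀).eventBisim β) := by
  constructor
  · rw [measurableSet_sum_iff]
    constructor
    · rw [Sum.inl_injective.preimage_image]
      exact hE.1
    · have : Sum.inr ⁻¹' (Sum.inl '' E) = (∅ : Set Bool) := by
        ext b; simp
      rw [this]
      exact MeasurableSet.empty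
  · rintro x ⟨e, he, rfl⟩ w hw
    cases w with
    | inl u => exact ⟨u, hE.2 he (hproj e u hw), rfl⟩
    | inr b => exact absurd hw (M.cross_not_Oiter s₀ t₀ e b β)

theorem Oiter_proj_down (β : Ordinal) : ∀ p u : S,
    (Sum.inl p, Sum.inl u) ∈ (M.sumLMP s₀ t₀).Oiter (M.sumLMP s₀ t₀).eventBisim β →
      (p, u) ∈ M.Oiter M.eventBisim β := by
  induction β using Ordinal.induction with
  | _ β ih =>
    rcases Ordinal.zero_or_succ_or_isSuccLimit β with rfl | ⟨γ, rfl⟩ | hlim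
    · rw [Oiter_zero, Oiter_zero]
      intro p u h
      apply M.rel_range_subset_eventBisim
      rintro A ⟨φ, rfl⟩
      have := (M.sumLMP s₀ t₀).eventBisim_subset_rel_range h _ ⟨trForm φ, rfl⟩
      rw [← M.preimage_sem_trForm s₀ t₀ φ]
      exact this
    · rw [← Ordinal.add_one_eq_succ, Oiter_succ, Oiter_succ]
      intro p u h a E hE
      have hγ : γ < Order.succ γ := Order.lt_succ γ
      have hE' := M.inl_image_mem_sigmaCl s₀ t₀ hE (ih γ hγ)
      have heq := h (Sum.inl a) _ hE'
      rw [M.sumLMP_inl_inl_apply s₀ t₀ a p hE'.1, M.sumLMP_inl_inl_apply s₀ t₀ a u hE'.1,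
        Sum.inl_injective.preimage_image] at heq
      exact heq
    · rw [Oiter_limit _ _ hlim, Oiter_limit _ _ hlim]
      intro p u h
      simp only [Set.mem_iInter] at h ⊢
      exact fun γ hγ => ih γ hγ p u (h γ hγ)

theorem Oiter_proj_up (β : Ordinal) : ∀ p u : S,
    (p, u) ∈ M.Oiter M.eventBisim β →
      (Sum.inl p, Sum.inl u) ∈ (M.sumLMP s₀ t₀).Oiter (M.sumLMP s₀ t₀).eventBisim β := by
  induction β using Ordinal.induction with
  | _ β ih =>
    rcases Ordinal.zero_or_succ_or_isSuccLimit β with rfl | ⟨γ, rfl⟩ | hlim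
    · rw [Oiter_zero, Oiter_zero]
      rintro p u ⟨Λ, hΛ, hst, hrel⟩
      refine ⟨{E : Set (S ⊕ Bool) | Sum.inl ⁻¹' E ∈ Λ}, ?_, ?_, ?_⟩
      · refine ⟨fun E hE => ?_, ?_, fun E hE => ?_, fun f hf => ?_⟩
        · rw [measurableSet_sum_iff]
          exact ⟨hΛ.subset_meas _ hE, (Set.to_countable _).measurableSet⟩
        · show Sum.inl ⁻¹' (∅ : Set (S ⊕ Bool)) ∈ Λ
          rw [Set.preimage_empty]
          exact hΛ.empty_mem
        · show Sum.inl ⁻¹' Eᶜ ∈ Λ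
          rw [Set.preimage_compl]
          exact hΛ.compl_mem _ hE
        · show Sum.inl ⁻¹' (⋃ n, f n) ∈ Λ
          rw [Set.preimage_iUnion]
          exact hΛ.iUnion_mem _ hf
      · rintro E hE q hq0 hq1 (a | u)
        · show Sum.inl ⁻¹' {z | ENNReal.ofReal (q : ℝ) < (M.sumLMP s₀ t₀).τ (Sum.inl a) z E} ∈ Λ
          have hEm : MeasurableSet E := by
            rw [measurableSet_sum_iff]
            exact ⟨hΛ.subset_meas _ hE, (Set.to_countable _).measurableSet⟩
          have : Sum.inl ⁻¹' {z | ENNReal.ofReal (q : ℝ) < (M.sumLMP s₀ t₀).τ (Sum.inl a) z E} =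
              {s : S | ENNReal.ofReal (q : ℝ) < M.τ a s (Sum.inl ⁻¹' E)} := by
            ext s
            simp only [Set.mem_preimage, Set.mem_setOf_eq]
            rw [M.sumLMP_inl_inl_apply s₀ t₀ a s hEm]
          rw [this]
          exact hst _ hE q hq0 hq1 a
        · show Sum.inl ⁻¹' {z | ENNReal.ofReal (q : ℝ) < (M.sumLMP s₀ t₀).τ (Sum.inr u) z E} ∈ Λ
          have : Sum.inl ⁻¹' {z | ENNReal.ofReal (q : ℝ) < (M.sumLMP s₀ t₀).τ (Sum.inr u) z E} =
              (∅ : Set S) := by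
            ext s
            simp [sumLMP_inr_inl]
          rw [this]
          exact hΛ.empty_mem
      · intro E hE
        exact hrel _ hE
    · rw [← Ordinal.add_one_eq_succ, Oiter_succ, Oiter_succ]
      rintro p u h (a | v) C hC
      · have hpre : Sum.inl ⁻¹' C ∈ sigmaCl (M.Oiter M.eventBisim γ) := by
          refine ⟨measurable_inl hC.1, fun e he w hw => ?_⟩
          have hγ : γ < Order.succ γ := Order.lt_succ γ
          exact hC.2 he (ih γ hγ e w hw)
        rw [M.sumLMP_inl_inl_apply s₀ t₀ a p hC.1, M.sumLMP_inl_inl_apply s₀ t₀ a u hC.1]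
        exact h a _ hpre
      · rw [sumLMP_inr_inl, sumLMP_inr_inl]
    · rw [Oiter_limit _ _ hlim, Oiter_limit _ _ hlim]
      intro p u h
      simp only [Set.mem_iInter] at h ⊢
      exact fun γ hγ => ih γ hγ p u (h γ hγ)

theorem pair_mem_Oiter_succ {α : Ordinal} (h : (s₀, t₀) ∈ M.Oiter M.eventBisim α) :
    ((Sum.inr true : S ⊕ Bool), Sum.inr false) ∈
      (M.sumLMP s₀ t₀).Oiter (M.sumLMP s₀ t₀).eventBisim (α + 1) := by
  rw [Oiter_succ]
  rintro (a | u) C hC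
  · rw [sumLMP_inl_inr, sumLMP_inl_inr]
  · rw [sumLMP_inr_inr, sumLMP_inr_inr]
    have h1 := M.Oiter_proj_up s₀ t₀ α s₀ t₀ h
    have h2 := (M.sumLMP s₀ t₀).Oiter_symm _
      (fun r hr => (M.sumLMP s₀ t₀).eventBisim_symm hr) α _ h1
    have hmem : (Sum.inl s₀ : S ⊕ Bool) ∈ C ↔ (Sum.inl t₀ : S ⊕ Bool) ∈ C :=
      ⟨fun hc => hC.2 hc h1, fun hc => hC.2 hc h2⟩
    rw [Measure.dirac_apply' _ hC.1, Measure.dirac_apply' _ hC.1]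
    simp only [cond]
    by_cases hc : (Sum.inl s₀ : S ⊕ Bool) ∈ C
    · rw [Set.indicator_of_mem hc, Set.indicator_of_mem (hmem.mp hc)]
      rfl
    · rw [Set.indicator_of_notMem hc,
        Set.indicator_of_notMem (fun hc2 => hc (hmem.mpr hc2))]

theorem pair_not_mem_Oiter_succ_succ {α : Ordinal} {a : L} {E : Set S}
    (hE : E ∈ sigmaCl (M.Oiter M.eventBisim α)) {q : ℚ}
    (hq : ENNReal.ofReal (q : ℝ) < M.τ a s₀ E) (hq' : ¬ ENNReal.ofReal (q : ℝ) < M.τ a t₀ E) :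
    ((Sum.inr true : S ⊕ Bool), Sum.inr false) ∉
      (M.sumLMP s₀ t₀).Oiter (M.sumLMP s₀ t₀).eventBisim (α + 1 + 1) := by
  intro hmem
  rw [Oiter_succ] at hmem
  have hE' : Sum.inl '' E ∈ sigmaCl ((M.sumLMP s₀ t₀).Oiter (M.sumLMP s₀ t₀).eventBisim α) :=
    M.inl_image_mem_sigmaCl s₀ t₀ hE (M.Oiter_proj_down s₀ t₀ α)
  set C : Set (S ⊕ Bool) :=
    {z | ENNReal.ofReal (q : ℝ) < (M.sumLMP s₀ t₀).τ (Sum.inl a) z (Sum.inl '' E)} with hCdef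
  have hCmeas : MeasurableSet C :=
    (M.sumLMP s₀ t₀).measurable_eval (Sum.inl a) _ hE'.1 measurableSet_Ioi
  have hC : C ∈ sigmaCl ((M.sumLMP s₀ t₀).Oiter (M.sumLMP s₀ t₀).eventBisim (α + 1)) := by
    refine ⟨hCmeas, fun z hz w hw => ?_⟩
    rw [Oiter_succ] at hw
    have heq := hw (Sum.inl a) _ hE'
    show ENNReal.ofReal (q : ℝ) < _
    rw [← heq]
    exact hz
  have hxy := hmem (Sum.inr ()) C hC
  rw [sumLMP_inr_inr, sumLMP_inr_inr] at hxy
  simp only [cond] at hxy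
  have hs₀C : (Sum.inl s₀ : S ⊕ Bool) ∈ C := by
    show ENNReal.ofReal (q : ℝ) < _
    rw [M.sumLMP_inl_inl_apply s₀ t₀ a s₀ hE'.1, Sum.inl_injective.preimage_image]
    exact hq
  have ht₀C : (Sum.inl t₀ : S ⊕ Bool) ∉ C := by
    show ¬ ENNReal.ofReal (q : ℝ) < _
    rw [M.sumLMP_inl_inl_apply s₀ t₀ a t₀ hE'.1, Sum.inl_injective.preimage_image]
    exact hq'
  rw [Measure.dirac_apply' _ hCmeas, Measure.dirac_apply' _ hCmeas,
    Set.indicator_of_mem hs₀C, Set.indicator_of_notMem ht₀C] at hxy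
  exact one_ne_zero hxy

end LMP

/-! ### Separability of the extended space -/

theorem separable_sum_bool {S : Type} [MeasurableSpace S] (h : SeparableMeasurableSpace S) :
    SeparableMeasurableSpace (S ⊕ Bool) := by
  obtain ⟨⟨U, hUc, hUgen⟩, hsep⟩ := h
  constructor
  · refine ⟨(Set.image Sum.inl) '' U ∪ {{Sum.inr true}, {Sum.inr false}}, ?_, ?_⟩
    · exact (hUc.image _).union ((Set.finite_singleton _).insert _).countable
    · apply le_antisymm
      · apply MeasurableSpace.generateFrom_le
        rintro t (⟨A, hA, rfl⟩ | ht)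
        · have hAm : MeasurableSet A := by
            rw [← hUgen]
            exact MeasurableSpace.measurableSet_generateFrom hA
          rw [measurableSet_sum_iff]
          constructor
          · rwa [Sum.inl_injective.preimage_image]
          · have : Sum.inr ⁻¹' (Sum.inl '' A) = (∅ : Set Bool) := by ext b; simp
            rw [this]; exact MeasurableSet.empty
        · rcases ht with rfl | rfl
          · rw [measurableSet_sum_iff]
            constructor
            · have h5 : Sum.inl ⁻¹' ({Sum.inr true} : Set (S ⊕ Bool)) = (∅ : Set S) := by
                ext s; simp
              rw [h5]; exact MeasurableSet.empty
            · exact (Set.to_countable _).measurableSet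
          · rw [measurableSet_sum_iff]
            constructor
            · have h5 : Sum.inl ⁻¹' ({Sum.inr false} : Set (S ⊕ Bool)) = (∅ : Set S) := by
                ext s; simp
              rw [h5]; exact MeasurableSet.empty
            · exact (Set.to_countable _).measurableSet
      · intro E hE
        rw [measurableSet_sum_iff] at hE
        set V : Set (Set (S ⊕ Bool)) :=
          (Set.image Sum.inl) '' U ∪ {{Sum.inr true}, {Sum.inr false}} with hV
        have hsingle : ∀ b : Bool, MeasurableSet[MeasurableSpace.generateFrom V]
            ({Sum.inr b} : Set (S ⊕ Bool)) := by
          intro b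
          cases b
          · exact MeasurableSpace.measurableSet_generateFrom (Or.inr (Or.inr rfl))
          · exact MeasurableSpace.measurableSet_generateFrom (Or.inr (Or.inl rfl))
        have hinl : ∀ A : Set S, MeasurableSet A →
            MeasurableSet[MeasurableSpace.generateFrom V] (Sum.inl '' A) := by
          intro A hA
          rw [← hUgen] at hA
          refine MeasurableSpace.generateFrom_induction U
            (fun A _ => MeasurableSet[MeasurableSpace.generateFrom V] (Sum.inl '' A))
            (fun t ht _ => MeasurableSpace.measurableSet_generateFrom (Or.inl ⟨t, ht, rfl⟩))
            ?_ ?_ ?_ A hA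
          · show MeasurableSet[MeasurableSpace.generateFrom V] (Sum.inl '' ∅)
            rw [Set.image_empty]
            exact @MeasurableSet.empty _ (MeasurableSpace.generateFrom V)
          · intro t _ iht
            show MeasurableSet[MeasurableSpace.generateFrom V] (Sum.inl '' tᶜ)
            have : Sum.inl '' tᶜ =
                (Sum.inl '' t ∪ ({Sum.inr true} ∪ {Sum.inr false}))ᶜ := by
              ext z
              cases z with
              | inl s => simp [Sum.inl_injective.mem_set_image]
              | inr b => cases b <;> simp
            rw [this]
            exact MeasurableSet.compl (MeasurableSet.union iht
              (MeasurableSet.union (hsingle true) (hsingle false)))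
          · intro f _ ihf
            show MeasurableSet[MeasurableSpace.generateFrom V] (Sum.inl '' ⋃ i, f i)
            rw [Set.image_iUnion]
            exact MeasurableSet.iUnion ihf
        have hErw : E = Sum.inl '' (Sum.inl ⁻¹' E) ∪ Sum.inr '' (Sum.inr ⁻¹' E) := by
          ext z
          cases z with
          | inl s =>
            simp only [Set.mem_union, Set.mem_image, Set.mem_preimage]
            constructor
            · intro h; exact Or.inl ⟨s, h, rfl⟩
            · rintro (⟨w, hw, heq⟩ | ⟨w, hw, heq⟩)
              · exact heq ▸ hw
              · exact absurd heq (by simp)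
          | inr b =>
            simp only [Set.mem_union, Set.mem_image, Set.mem_preimage]
            constructor
            · intro h; exact Or.inr ⟨b, h, rfl⟩
            · rintro (⟨w, hw, heq⟩ | ⟨w, hw, heq⟩)
              · exact absurd heq (by simp)
              · exact heq ▸ hw
        have hrB : MeasurableSet[MeasurableSpace.generateFrom V]
            (Sum.inr '' (Sum.inr ⁻¹' E)) := by
          have himg : Sum.inr '' (Sum.inr ⁻¹' E) =
              ⋃ b ∈ Sum.inr ⁻¹' E, ({Sum.inr b} : Set (S ⊕ Bool)) := by
            ext z
            simp only [Set.mem_image, Set.mem_iUnion, Set.mem_singleton_iff]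
            constructor
            · rintro ⟨w, hw, rfl⟩; exact ⟨w, hw, rfl⟩
            · rintro ⟨w, hw, rfl⟩; exact ⟨w, hw, rfl⟩
          rw [himg]
          exact MeasurableSet.biUnion (Set.to_countable _) fun b _ => hsingle b
        rw [hErw]
        exact MeasurableSet.union (hinl _ hE.1) hrB
  · rintro (s | b) (t | b') hne
    · have hst : s ≠ t := fun h => hne (by rw [h])
      obtain ⟨A, hA, hsA, htA⟩ := hsep s t hst
      refine ⟨Sum.inl '' A, ?_, ⟨s, hsA, rfl⟩, ?_⟩
      · rw [measurableSet_sum_iff]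
        refine ⟨by rwa [Sum.inl_injective.preimage_image], ?_⟩
        have : Sum.inr ⁻¹' (Sum.inl '' A) = (∅ : Set Bool) := by ext b; simp
        rw [this]; exact MeasurableSet.empty
      · rintro ⟨t', ht', heq⟩
        exact htA (Sum.inl_injective heq ▸ ht')
    · refine ⟨Set.range Sum.inl, ?_, ⟨s, rfl⟩, by simp⟩
      rw [measurableSet_sum_iff]
      constructor
      · have : Sum.inl ⁻¹' (Set.range (Sum.inl : S → S ⊕ Bool)) = Set.univ := by
          ext x; simp
        rw [this]; exact MeasurableSet.univ
      · have : Sum.inr ⁻¹' (Set.range (Sum.inl : S → S ⊕ Bool)) = (∅ : Set Bool) := by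
          ext x; simp
        rw [this]; exact MeasurableSet.empty
    · refine ⟨{Sum.inr b}, ?_, rfl, by simp⟩
      rw [measurableSet_sum_iff]
      constructor
      · have : Sum.inl ⁻¹' ({Sum.inr b} : Set (S ⊕ Bool)) = (∅ : Set S) := by ext x; simp
        rw [this]; exact MeasurableSet.empty
      · exact (Set.to_countable _).measurableSet
    · have hbb : b ≠ b' := fun h => hne (by rw [h])
      refine ⟨{Sum.inr b}, ?_, rfl, fun h => hbb (Sum.inr_injective h).symm⟩
      rw [measurableSet_sum_iff]
      constructor
      · have : Sum.inl ⁻¹' ({Sum.inr b} : Set (S ⊕ Bool)) = (∅ : Set S) := by ext x; simp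
        rw [this]; exact MeasurableSet.empty
      · exact (Set.to_countable _).measurableSet

/-! ### Final assembly -/

theorem LMP.final_step {S L : Type} [MeasurableSpace S] [Countable L] (M : LMP S L)
    (hsep : SeparableMeasurableSpace S) {α : Ordinal.{0}} {s₀ t₀ : S}
    (hmem : (s₀, t₀) ∈ M.Oiter M.eventBisim α) {a : L} {E : Set S}
    (hE : E ∈ LMP.sigmaCl (M.Oiter M.eventBisim α))
    (hlt : M.τ a t₀ E < M.τ a s₀ E) :
    ∃ (S' : Type) (mS' : MeasurableSpace S') (L' : Type) (_ : Countable L')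
      (M' : @LMP S' L' mS'), SeparableMeasurableSpace S' ∧
        ∃ ζ : Ordinal.{0}, M'.IsZhou ζ ∧ α + 2 ≤ ζ := by
  obtain ⟨q, hq0, h1, h2⟩ := ENNReal.lt_iff_exists_rat_btwn.mp hlt
  have hq : ENNReal.ofReal (q : ℝ) < M.τ a s₀ E := h2
  have hq' : ¬ ENNReal.ofReal (q : ℝ) < M.τ a t₀ E := not_lt.mpr h1.le
  obtain ⟨ζ, hζ⟩ := (M.sumLMP s₀ t₀).exists_isZhou
  refine ⟨S ⊕ Bool, inferInstance, L ⊕ Unit, inferInstance, M.sumLMP s₀ t₀,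
    separable_sum_bool hsep, ζ, hζ, ?_⟩
  by_contra hcon
  push_neg at hcon
  have hζle : ζ ≤ α + 1 := by
    have h3 : α + 2 = (α + 1) + 1 := by rw [← one_add_one_eq_two, ← add_assoc]
    rw [h3, Ordinal.add_one_eq_succ] at hcon
    exact Order.lt_succ_iff.mp hcon
  have hxy1 := M.pair_mem_Oiter_succ s₀ t₀ hmem
  have hxy2 := M.pair_not_mem_Oiter_succ_succ s₀ t₀ hE hq hq'
  have hin : ((Sum.inr true : S ⊕ Bool), Sum.inr false) ∈ (M.sumLMP s₀ t₀).stateBisim := by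
    rw [← hζ.1]
    exact (M.sumLMP s₀ t₀).Oiter_antitone _ (M.sumLMP s₀ t₀).Oop_eventBisim_subset hζle hxy1
  exact hxy2 ((M.sumLMP s₀ t₀).stateBisim_subset_Oiter (α + 1 + 1) hin)

theorem LMP.main_aux {S L : Type} [MeasurableSpace S] [Countable L] (M : LMP S L)
    (hsep : SeparableMeasurableSpace S) {α : Ordinal.{0}} (hz : M.IsZhou (α + 1)) :
    ∃ (S' : Type) (mS' : MeasurableSpace S') (L' : Type) (_ : Countable L')
      (M' : @LMP S' L' mS'), SeparableMeasurableSpace S' ∧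
        ∃ ζ : Ordinal.{0}, M'.IsZhou ζ ∧ α + 2 ≤ ζ := by
  obtain ⟨heq, hmin⟩ := hz
  have hαlt : α < α + 1 := by rw [Ordinal.add_one_eq_succ]; exact Order.lt_succ α
  have hOα_ne := hmin α hαlt
  have hsub := M.stateBisim_subset_Oiter α
  have hexists : ∃ p, p ∈ M.Oiter M.eventBisim α ∧ p ∉ M.stateBisim := by
    by_contra hc
    push_neg at hc
    exact hOα_ne (subset_antisymm (fun p hp => hc p hp) hsub)
  obtain ⟨⟨s₁, t₁⟩, hmemp, hnotmem⟩ := hexists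
  rw [← heq, LMP.Oiter_succ] at hnotmem
  have hwit : ∃ (a : L) (E : Set S), E ∈ LMP.sigmaCl (M.Oiter M.eventBisim α) ∧
      M.τ a s₁ E ≠ M.τ a t₁ E := by
    by_contra hc
    push_neg at hc
    exact hnotmem fun a E hE => hc a E hE
  obtain ⟨a, E, hE, hne⟩ := hwit
  rcases lt_or_gt_of_ne hne with hlt | hlt
  · have hmem' : (t₁, s₁) ∈ M.Oiter M.eventBisim α :=
      M.Oiter_symm _ (fun r hr => M.eventBisim_symm hr) α _ hmemp
    exact M.final_step hsep hmem' hE hlt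
  · exact M.final_step hsep hmemp hE hlt

/-- If some separable LMP has Zhou ordinal `α + 1`, then there is a separable LMP whose
Zhou ordinal is at least `α + 2`. -/
theorem exists_sepLMP_zhou_ge_succ_succ (α : Ordinal.{0})
    (h : ∃ P : PackedLMP, P.Separable ∧ P.IsZhou (α + 1)) :
    ∃ P' : PackedLMP, P'.Separable ∧ ∃ ζ : Ordinal.{0}, P'.IsZhou ζ ∧ α + 2 ≤ ζ := by
  obtain ⟨⟨S, mS, L, cL, M⟩, hsep, hz⟩ := h
  letI := mS
  letI := cL
  have hsep' : SeparableMeasurableSpace S := hsep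
  have hz' : M.IsZhou (α + 1) := hz
  obtain ⟨S', mS', L', cL', M', hsep'', ζ, hζ, hge⟩ := M.main_aux hsep' hz'
  exact ⟨⟨S', mS', L', cL', M'⟩, hsep'', ζ, hζ, hge⟩
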